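/- (Levi monotone convergence for gauge integrals) Let (fᵣ) be a sequence of real functions, each Henstock–Kurzweil integrable on a brick I, such that for each point P the sequence (fᵣ(P)) is monotone increasing and converges to f(P). If the integrals Fᵣ = ∫_I fᵣ dμ have a finite supremum F, then f is Henstock–Kurzweil integrable on I with ∫_I f dμ = F. -/

import Mathlib

open Set Filter

/-- A brick (compact non-degenerate interval) in `ι → ℝ`. -/
structure Brick (ι : Type*) [Fintype ι] where
  lower : ι → ℝ
  upper : ι → ℝ
  lt : ∀ j, lower j < upper j

variable {ι : Type*} [Fintype ι]

namespace Brick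

/-- The underlying closed set of a brick. -/
def toSet (I : Brick ι) : Set (ι → ℝ) := {x | ∀ j, x j ∈ Set.Icc (I.lower j) (I.upper j)}

/-- The open interior of a brick. -/
def inter (I : Brick ι) : Set (ι → ℝ) := {x | ∀ j, x j ∈ Set.Ioo (I.lower j) (I.upper j)}

/-- The volume of a brick. -/
noncomputable def vol (I : Brick ι) : ℝ := ∏ j, (I.upper j - I.lower j)

end Brick

/-- A tagged division of a brick `I`: finitely many non-overlapping sub-bricks covering `I`,
each with a tag point belonging to it. -/
structure TaggedDiv {ι : Type*} [Fintype ι] (I : Brick ι) where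
  pieces : Finset (Brick ι × (ι → ℝ))
  subset_of_mem : ∀ p ∈ pieces, (p.1 : Brick ι).toSet ⊆ I.toSet
  tag_mem : ∀ p ∈ pieces, p.2 ∈ (p.1 : Brick ι).toSet
  nonoverlap : ∀ p ∈ pieces, ∀ q ∈ pieces, p ≠ q →
    (p.1 : Brick ι).inter ∩ (q.1 : Brick ι).inter = ∅
  cover : I.toSet = ⋃ p ∈ pieces, (p.1 : Brick ι).toSet

/-- A gauge on a brick: a function positive at each point of the brick. -/
def IsGauge (I : Brick ι) (δ : (ι → ℝ) → ℝ) : Prop := ∀ x ∈ I.toSet, 0 < δ x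

/-- A tagged division is compatible with the gauge `δ` if each brick lies in the open ball
of radius `δ` about its tag. -/
def Compat {I : Brick ι} (D : TaggedDiv I) (δ : (ι → ℝ) → ℝ) : Prop :=
  ∀ p ∈ D.pieces, (p.1 : Brick ι).toSet ⊆ Metric.ball p.2 (δ p.2)

/-- The Riemann sum of `f` over a tagged division. -/
noncomputable def riemannSum {I : Brick ι} (f : (ι → ℝ) → ℝ) (D : TaggedDiv I) : ℝ :=
  ∑ p ∈ D.pieces, f p.2 * (p.1 : Brick ι).vol

/-- `f` has Henstock–Kurzweil integral `A` on the brick `I`. -/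
def HasHK (I : Brick ι) (f : (ι → ℝ) → ℝ) (A : ℝ) : Prop :=
  ∀ ε > 0, ∃ δ : (ι → ℝ) → ℝ, IsGauge I δ ∧
    ∀ D : TaggedDiv I, Compat D δ → |riemannSum f D - A| < ε

namespace Brick

variable (J : Brick ι)

lemma toSet_eq_pi : J.toSet = Set.pi Set.univ (fun j => Set.Icc (J.lower j) (J.upper j)) := by
  ext x; simp [toSet, Set.mem_pi, Set.mem_Icc, Pi.le_def, forall_and]

lemma inter_eq_pi : J.inter = Set.pi Set.univ (fun j => Set.Ioo (J.lower j) (J.upper j)) := by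
  ext x; simp [inter, Set.mem_pi]

lemma vol_pos : 0 < J.vol :=
  Finset.prod_pos fun j _ => sub_pos.2 (J.lt j)

lemma vol_nonneg : 0 ≤ J.vol := J.vol_pos.le

lemma isOpen_inter : IsOpen J.inter := by
  rw [inter_eq_pi]
  exact isOpen_set_pi Set.finite_univ fun j _ => isOpen_Ioo

lemma inter_subset_toSet : J.inter ⊆ J.toSet := fun x hx j => Set.Ioo_subset_Icc_self (hx j)

lemma interior_toSet : interior J.toSet = J.inter := by
  rw [toSet_eq_pi, inter_eq_pi, interior_pi_set Set.finite_univ]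
  simp [interior_Icc]

lemma inter_nonempty : J.inter.Nonempty := by
  refine ⟨fun j => (J.lower j + J.upper j) / 2, fun j => ?_⟩
  constructor <;> nlinarith [J.lt j]

lemma isCompact_toSet : IsCompact J.toSet := by
  rw [toSet_eq_pi]
  exact isCompact_univ_pi fun j => isCompact_Icc

lemma isClosed_toSet : IsClosed J.toSet := by
  rw [toSet_eq_pi]
  exact isClosed_set_pi fun j _ => isClosed_Icc

lemma lower_mem_toSet : J.lower ∈ J.toSet := fun j => ⟨le_refl _, (J.lt j).le⟩

lemma subset_inter_of_isOpen {U : Set (ι → ℝ)} (hU : IsOpen U) (h : U ⊆ J.toSet) :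
    U ⊆ J.inter := by
  rw [← interior_toSet]
  exact hU.subset_interior_iff.2 h

lemma volume_toSet : MeasureTheory.volume J.toSet = ENNReal.ofReal J.vol := by
  rw [toSet_eq_pi, MeasureTheory.volume_pi_pi]
  simp only [Real.volume_Icc]
  rw [vol, ← ENNReal.ofReal_prod_of_nonneg]
  intro j _; linarith [J.lt j]

lemma volume_inter : MeasureTheory.volume J.inter = ENNReal.ofReal J.vol := by
  rw [inter_eq_pi, MeasureTheory.volume_pi_pi]
  simp only [Real.volume_Ioo]
  rw [vol, ← ENNReal.ofReal_prod_of_nonneg]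
  intro j _; linarith [J.lt j]

lemma measurableSet_inter : MeasurableSet J.inter := by
  rw [inter_eq_pi]
  exact MeasurableSet.univ_pi fun j => measurableSet_Ioo

end Brick
lemma TaggedDiv.sum_vol_le {I : Brick ι} (D : TaggedDiv I) :
    ∑ p ∈ D.pieces, (p.1 : Brick ι).vol ≤ I.vol := by
  have hd : Set.PairwiseDisjoint (↑D.pieces : Set (Brick ι × (ι → ℝ)))
      (fun p => (p.1 : Brick ι).inter) := by
    intro p hp q hq hpq
    exact Set.disjoint_iff_inter_eq_empty.2 (D.nonoverlap p hp q hq hpq)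
  have key : (⋃ p ∈ D.pieces, (p.1 : Brick ι).inter) ⊆ I.toSet := by
    intro x hx
    simp only [Set.mem_iUnion] at hx
    obtain ⟨p, hp, hx⟩ := hx
    exact D.subset_of_mem p hp (p.1.inter_subset_toSet hx)
  have h1 : ∑ p ∈ D.pieces, MeasureTheory.volume (p.1 : Brick ι).inter
      ≤ MeasureTheory.volume I.toSet := by
    rw [← MeasureTheory.measure_biUnion_finset hd (fun p _ => p.1.measurableSet_inter)]
    exact MeasureTheory.measure_mono key
  have h2 : ENNReal.ofReal (∑ p ∈ D.pieces, (p.1 : Brick ι).vol)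
      ≤ ENNReal.ofReal I.vol := by
    rw [ENNReal.ofReal_sum_of_nonneg fun p _ => p.1.vol_nonneg]
    simpa only [Brick.volume_inter, Brick.volume_toSet] using h1
  exact (ENNReal.ofReal_le_ofReal_iff I.vol_nonneg).1 h2

lemma HasHK.sub {I : Brick ι} {f g : (ι → ℝ) → ℝ} {A B : ℝ}
    (hf : HasHK I f A) (hg : HasHK I g B) :
    HasHK I (fun x => f x - g x) (A - B) := by
  intro ε hε
  obtain ⟨δ1, hδ1, h1⟩ := hf (ε / 2) (by linarith)
  obtain ⟨δ2, hδ2, h2⟩ := hg (ε / 2) (by linarith)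
  refine ⟨fun x => min (δ1 x) (δ2 x), fun x hx => lt_min (hδ1 x hx) (hδ2 x hx), ?_⟩
  intro D hD
  have c1 : Compat D δ1 := fun p hp =>
    (hD p hp).trans (Metric.ball_subset_ball (min_le_left _ _))
  have c2 : Compat D δ2 := fun p hp =>
    (hD p hp).trans (Metric.ball_subset_ball (min_le_right _ _))
  have : riemannSum (fun x => f x - g x) D = riemannSum f D - riemannSum g D := by
    simp only [riemannSum, sub_mul, Finset.sum_sub_distrib]
  rw [this]
  have := h1 D c1
  have := h2 D c2
  rw [abs_lt] at *
  constructor <;> [linarith; linarith]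
/-- Gluing tagged divisions of the bricks of a non-overlapping cover of `I` into a
tagged division of `I`. -/
lemma combine (I : Brick ι) (T : Finset (Brick ι × (ι → ℝ)))
    (hsub : ∀ p ∈ T, (p.1 : Brick ι).toSet ⊆ I.toSet)
    (hnov : ∀ p ∈ T, ∀ q ∈ T, p ≠ q → (p.1 : Brick ι).inter ∩ (q.1 : Brick ι).inter = ∅)
    (hcov : I.toSet = ⋃ p ∈ T, (p.1 : Brick ι).toSet)
    (E : ∀ p, p ∈ T → TaggedDiv p.1) :
    ∃ D : TaggedDiv I,
      (∀ q ∈ D.pieces, ∃ p, ∃ hp : p ∈ T, q ∈ (E p hp).pieces) ∧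
      ∀ (g : (ι → ℝ) → ℝ) (h : (Brick ι × (ι → ℝ)) → ℝ),
        (∀ p (hp : p ∈ T), riemannSum g (E p hp) = h p) →
        riemannSum g D = ∑ p ∈ T, h p := by
  classical
  -- interior containment: any piece of `E p` has its interior inside `p.1.inter`
  have hint : ∀ p (hp : p ∈ T), ∀ q ∈ (E p hp).pieces,
      (q.1 : Brick ι).inter ⊆ (p.1 : Brick ι).inter := fun p hp q hq =>
    p.1.subset_inter_of_isOpen q.1.isOpen_inter
      ((q.1.inter_subset_toSet).trans ((E p hp).subset_of_mem q hq))
  set pcs : Finset (Brick ι × (ι → ℝ)) :=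
    T.attach.biUnion (fun p => (E p.1 p.2).pieces) with hpcs
  have hmem : ∀ q, q ∈ pcs ↔ ∃ p, ∃ hp : p ∈ T, q ∈ (E p hp).pieces := by
    intro q
    simp only [hpcs, Finset.mem_biUnion, Finset.mem_attach, true_and, Subtype.exists]
  refine ⟨⟨pcs, ?_, ?_, ?_, ?_⟩, fun q hq => (hmem q).1 hq, ?_⟩
  · intro q hq
    obtain ⟨p, hp, hq⟩ := (hmem q).1 hq
    exact ((E p hp).subset_of_mem q hq).trans (hsub p hp)
  · intro q hq
    obtain ⟨p, hp, hq⟩ := (hmem q).1 hq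
    exact (E p hp).tag_mem q hq
  · intro q hq q' hq' hne
    obtain ⟨p, hp, hq⟩ := (hmem q).1 hq
    obtain ⟨p', hp', hq'⟩ := (hmem q').1 hq'
    by_cases hpp : p = p'
    · subst hpp
      exact (E p hp).nonoverlap q hq q' hq' hne
    · have h1 := hint p hp q hq
      have h2 := hint p' hp' q' hq'
      have := hnov p hp p' hp' hpp
      apply Set.eq_empty_of_subset_empty
      calc (q.1 : Brick ι).inter ∩ (q'.1 : Brick ι).inter
          ⊆ (p.1 : Brick ι).inter ∩ (p'.1 : Brick ι).inter := Set.inter_subset_inter h1 h2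
        _ = ∅ := this
  · rw [hcov]
    ext x
    simp only [Set.mem_iUnion]
    constructor
    · rintro ⟨p, hp, hx⟩
      have := (E p hp).cover
      rw [this] at hx
      simp only [Set.mem_iUnion] at hx
      obtain ⟨q, hq, hx⟩ := hx
      exact ⟨q, (hmem q).2 ⟨p, hp, hq⟩, hx⟩
    · rintro ⟨q, hq, hx⟩
      obtain ⟨p, hp, hq⟩ := (hmem q).1 hq
      exact ⟨p, hp, ((E p hp).subset_of_mem q hq) hx⟩
  · intro g h hh
    have hdisj : ∀ (p : {x // x ∈ T}) (hp : p ∈ T.attach) (p' : {x // x ∈ T})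
        (hp' : p' ∈ T.attach), p ≠ p' →
        Disjoint ((E p.1 p.2).pieces) ((E p'.1 p'.2).pieces) := by
      intro p _ p' _ hne
      rw [Finset.disjoint_left]
      intro q hq hq'
      have hne' : p.1 ≠ p'.1 := fun h => hne (Subtype.ext h)
      have h1 := hint p.1 p.2 q hq
      have h2 := hint p'.1 p'.2 q hq'
      have hempty := hnov p.1 p.2 p'.1 p'.2 hne'
      obtain ⟨x, hx⟩ := q.1.inter_nonempty
      have : x ∈ (p.1.1 : Brick ι).inter ∩ (p'.1.1 : Brick ι).inter := ⟨h1 hx, h2 hx⟩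
      rw [hempty] at this
      exact this
    show ∑ q ∈ pcs, g q.2 * (q.1 : Brick ι).vol = _
    rw [hpcs, Finset.sum_biUnion hdisj]
    rw [← Finset.sum_attach T h]
    exact Finset.sum_congr rfl fun p _ => hh p.1 p.2
/-- The tagged division of `K` consisting of `K` itself with tag `x`. -/
def singletonDiv (K : Brick ι) (x : ι → ℝ) (hx : x ∈ K.toSet) : TaggedDiv K where
  pieces := {(K, x)}
  subset_of_mem := by rintro p hp; simp only [Finset.mem_singleton] at hp; subst hp; rfl
  tag_mem := by rintro p hp; simp only [Finset.mem_singleton] at hp; subst hp; exact hx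
  nonoverlap := by
    rintro p hp q hq hne
    simp only [Finset.mem_singleton] at hp hq
    exact absurd (hp.trans hq.symm) hne
  cover := by simp

@[simp] lemma singletonDiv_pieces (K : Brick ι) (x : ι → ℝ) (hx : x ∈ K.toSet) :
    (singletonDiv K x hx).pieces = {(K, x)} := rfl

/-- Bisection child of a brick. -/
noncomputable def Brick.child (J : Brick ι) (σ : ι → Bool) : Brick ι where
  lower j := if σ j then (J.lower j + J.upper j) / 2 else J.lower j
  upper j := if σ j then J.upper j else (J.lower j + J.upper j) / 2
  lt j := by cases hσ : σ j <;> simp [hσ] <;> nlinarith [J.lt j]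

lemma Brick.child_subset (J : Brick ι) (σ : ι → Bool) : (J.child σ).toSet ⊆ J.toSet := by
  intro x hx j
  have h := hx j
  cases hσ : σ j <;> simp only [Brick.child, hσ, Set.mem_Icc, if_true, if_false,
    Bool.false_eq_true, Bool.true_eq_false] at h ⊢ <;>
    constructor <;> nlinarith [J.lt j, h.1, h.2]

lemma Brick.child_width (J : Brick ι) (σ : ι → Bool) (j : ι) :
    (J.child σ).upper j - (J.child σ).lower j = (J.upper j - J.lower j) / 2 := by
  cases hσ : σ j <;> simp [Brick.child, hσ] <;> ring

lemma Brick.exists_child_mem (J : Brick ι) {x : ι → ℝ} (hx : x ∈ J.toSet) :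
    ∃ σ : ι → Bool, x ∈ (J.child σ).toSet := by
  classical
  refine ⟨fun j => decide ((J.lower j + J.upper j) / 2 ≤ x j), fun j => ?_⟩
  have h := hx j
  by_cases hm : (J.lower j + J.upper j) / 2 ≤ x j
  · simp only [Brick.child, Set.mem_Icc, decide_eq_true_eq, if_pos hm]
    exact ⟨hm, h.2⟩
  · simp only [Brick.child, Set.mem_Icc, decide_eq_true_eq, if_neg hm]
    exact ⟨h.1, (not_le.1 hm).le⟩

lemma Brick.child_inter_disjoint (J : Brick ι) {σ σ' : ι → Bool} (h : σ ≠ σ') :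
    (J.child σ).inter ∩ (J.child σ').inter = ∅ := by
  obtain ⟨j, hj⟩ := Function.ne_iff.1 h
  apply Set.eq_empty_of_forall_notMem
  rintro x ⟨h1, h2⟩
  have h1j := h1 j
  have h2j := h2 j
  cases hσ : σ j <;> cases hσ' : σ' j
  · exact hj (hσ.trans hσ'.symm)
  · simp only [Brick.child, hσ, hσ', if_true, if_false, Bool.false_eq_true, Set.mem_Ioo] at h1j h2j
    linarith [h1j.2, h2j.1]
  · simp only [Brick.child, hσ, hσ', if_true, if_false, Bool.false_eq_true, Set.mem_Ioo] at h1j h2j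
    linarith [h1j.1, h2j.2]
  · exact hj (hσ.trans hσ'.symm)

lemma Brick.child_lower_ne (J : Brick ι) {σ σ' : ι → Bool} (h : σ ≠ σ') :
    (J.child σ).lower ≠ (J.child σ').lower := by
  obtain ⟨j, hj⟩ := Function.ne_iff.1 h
  intro hc
  have := congrFun hc j
  cases hσ : σ j <;> cases hσ' : σ' j
  · exact hj (hσ.trans hσ'.symm)
  · simp only [Brick.child, hσ, hσ', Bool.false_eq_true, if_true, if_false] at this
    nlinarith [J.lt j]
  · simp only [Brick.child, hσ, hσ', Bool.false_eq_true, if_true, if_false] at this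
    nlinarith [J.lt j]
  · exact hj (hσ.trans hσ'.symm)

lemma cousin_step (J : Brick ι) (γ : (ι → ℝ) → ℝ)
    (h : ¬ ∃ D : TaggedDiv J, Compat D γ) :
    ∃ σ : ι → Bool, ¬ ∃ D : TaggedDiv (J.child σ), Compat D γ := by
  classical
  by_contra hc
  push_neg at hc
  choose Dv hDv using hc
  set T : Finset (Brick ι × (ι → ℝ)) :=
    Finset.univ.image (fun σ : ι → Bool => (J.child σ, (J.child σ).lower)) with hT
  have hmemT : ∀ p ∈ T, ∃ σ, p = (J.child σ, (J.child σ).lower) := by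
    intro p hp
    rw [hT, Finset.mem_image] at hp
    obtain ⟨σ, _, hσ⟩ := hp
    exact ⟨σ, hσ.symm⟩
  have hsub : ∀ p ∈ T, (p.1 : Brick ι).toSet ⊆ J.toSet := by
    intro p hp
    obtain ⟨σ, rfl⟩ := hmemT p hp
    exact J.child_subset σ
  have hnov : ∀ p ∈ T, ∀ q ∈ T, p ≠ q →
      (p.1 : Brick ι).inter ∩ (q.1 : Brick ι).inter = ∅ := by
    intro p hp q hq hne
    obtain ⟨σ, rfl⟩ := hmemT p hp
    obtain ⟨σ', rfl⟩ := hmemT q hq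
    have hσ : σ ≠ σ' := by
      rintro rfl; exact hne rfl
    exact J.child_inter_disjoint hσ
  have hcov : J.toSet = ⋃ p ∈ T, (p.1 : Brick ι).toSet := by
    apply Set.Subset.antisymm
    · intro x hx
      obtain ⟨σ, hσ⟩ := J.exists_child_mem hx
      simp only [Set.mem_iUnion]
      exact ⟨(J.child σ, (J.child σ).lower), by
        rw [hT, Finset.mem_image]; exact ⟨σ, Finset.mem_univ σ, rfl⟩, hσ⟩
    · intro x hx
      simp only [Set.mem_iUnion] at hx
      obtain ⟨p, hp, hx⟩ := hx
      exact hsub p hp hx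
  have hEx : ∀ p, p ∈ T → ∃ D : TaggedDiv p.1, Compat D γ := by
    intro p hp
    obtain ⟨σ, rfl⟩ := hmemT p hp
    exact ⟨Dv σ, hDv σ⟩
  choose E hE using hEx
  obtain ⟨D, hDmem, _⟩ := combine J T hsub hnov hcov E
  refine h ⟨D, fun q hq => ?_⟩
  obtain ⟨p, hp, hq⟩ := hDmem q hq
  exact hE p hp q hq

/-- **Cousin's lemma**: every gauge on a brick admits a compatible tagged division. -/
lemma cousin (J : Brick ι) (γ : (ι → ℝ) → ℝ) (hγ : ∀ x ∈ J.toSet, 0 < γ x) :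
    ∃ D : TaggedDiv J, Compat D γ := by
  classical
  by_contra h0
  have step : ∀ K : Brick ι, ¬(∃ D : TaggedDiv K, Compat D γ) →
      ∃ σ, ¬ ∃ D : TaggedDiv (K.child σ), Compat D γ := fun K hK => cousin_step K γ hK
  choose nxt hnxt using step
  let f : ℕ → {K : Brick ι // ¬ ∃ D : TaggedDiv K, Compat D γ} := fun n =>
    Nat.rec ⟨J, h0⟩ (fun _ ih => ⟨ih.1.child (nxt ih.1 ih.2), hnxt ih.1 ih.2⟩) n
  have hfsucc : ∀ k, (f (k + 1)).1 = (f k).1.child (nxt (f k).1 (f k).2) := fun k => rfl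
  have hmono : ∀ k, (f (k + 1)).1.toSet ⊆ (f k).1.toSet := by
    intro k; rw [hfsucc k]; exact Brick.child_subset _ _
  have hwidth : ∀ k j, (f k).1.upper j - (f k).1.lower j = (J.upper j - J.lower j) / 2 ^ k := by
    intro k
    induction k with
    | zero => intro j; simp [f]
    | succ k ih =>
      intro j
      rw [hfsucc k, Brick.child_width, ih j]
      ring
  have hsubJ : ∀ k, (f k).1.toSet ⊆ J.toSet := by
    intro k
    induction k with
    | zero => exact fun x hx => hx
    | succ k ih => exact (hmono k).trans ih
  obtain ⟨x, hx⟩ : (⋂ k, (f k).1.toSet).Nonempty := by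
    exact IsCompact.nonempty_iInter_of_sequence_nonempty_isCompact_isClosed
      (fun k => (f k).1.toSet) hmono (fun k => ⟨(f k).1.lower, (f k).1.lower_mem_toSet⟩)
      ((f 0).1.isCompact_toSet) (fun k => (f k).1.isClosed_toSet)
  simp only [Set.mem_iInter] at hx
  have hxJ : x ∈ J.toSet := hsubJ 0 (hx 0)
  have hγx : 0 < γ x := hγ x hxJ
  set C : ℝ := (∑ j, (J.upper j - J.lower j)) + 1 with hC
  have hCpos : 0 < C := by
    have : (0:ℝ) ≤ ∑ j, (J.upper j - J.lower j) :=
      Finset.sum_nonneg fun j _ => by linarith [J.lt j]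
    linarith
  have hCj : ∀ j, J.upper j - J.lower j ≤ C := by
    intro j
    have : J.upper j - J.lower j ≤ ∑ j', (J.upper j' - J.lower j') :=
      Finset.single_le_sum (f := fun j' => J.upper j' - J.lower j')
        (fun j' _ => by linarith [J.lt j']) (Finset.mem_univ j)
    linarith
  obtain ⟨k, hk⟩ : ∃ k : ℕ, C / 2 ^ k < γ x := by
    obtain ⟨k, hk⟩ := pow_unbounded_of_one_lt (C / γ x) (one_lt_two (α := ℝ))
    refine ⟨k, ?_⟩
    have h2k : (0:ℝ) < 2 ^ k := by positivity
    rw [div_lt_iff₀ h2k]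
    have := (div_lt_iff₀ hγx).1 hk
    nlinarith
  have hball : (f k).1.toSet ⊆ Metric.ball x (γ x) := by
    intro y hy
    rw [Metric.mem_ball, dist_pi_lt_iff hγx]
    intro j
    have hyj := hy j
    have hxj := hx k j
    have hw := hwidth k j
    rw [Real.dist_eq]
    have h1 : |y j - x j| ≤ (f k).1.upper j - (f k).1.lower j := by
      rw [abs_sub_le_iff]
      constructor <;> linarith [hyj.1, hyj.2, hxj.1, hxj.2]
    have h2 : (J.upper j - J.lower j) / 2 ^ k ≤ C / 2 ^ k := by
      have h2k : (0:ℝ) < 2 ^ k := by positivity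
      exact div_le_div_of_nonneg_right (hCj j) h2k.le
    calc |y j - x j| ≤ (f k).1.upper j - (f k).1.lower j := h1
      _ = (J.upper j - J.lower j) / 2 ^ k := hw
      _ ≤ C / 2 ^ k := h2
      _ < γ x := hk
  refine (f k).2 ⟨singletonDiv (f k).1 x (hx k), ?_⟩
  intro p hp
  simp only [singletonDiv_pieces, Finset.mem_singleton] at hp
  subst hp
  exact hball
/-- One-sided Henstock-type bound: the Riemann sum of a nonnegative function over a
`γ`-fine portion of a division is at most the integral plus the tolerance. -/
lemma partial_le {I : Brick ι} (g : (ι → ℝ) → ℝ) (hg : ∀ x, 0 ≤ g x) {G ε : ℝ}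
    (γ : (ι → ℝ) → ℝ) (hγ : IsGauge I γ)
    (hprop : ∀ D : TaggedDiv I, Compat D γ → |riemannSum g D - G| < ε)
    (D : TaggedDiv I) (S : Finset (Brick ι × (ι → ℝ))) (hS : S ⊆ D.pieces)
    (hfine : ∀ p ∈ S, (p.1 : Brick ι).toSet ⊆ Metric.ball p.2 (γ p.2)) :
    ∑ p ∈ S, g p.2 * (p.1 : Brick ι).vol ≤ G + ε := by
  classical
  have hEx : ∀ p, p ∈ D.pieces → ∃ Dp : TaggedDiv p.1,
      Compat Dp γ ∧ (p ∈ S → Dp.pieces = {p}) := by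
    intro p hp
    by_cases hpS : p ∈ S
    · refine ⟨singletonDiv p.1 p.2 (D.tag_mem p hp), ?_, fun _ => rfl⟩
      intro q hq
      simp only [singletonDiv_pieces, Finset.mem_singleton] at hq
      subst hq; exact hfine p hpS
    · obtain ⟨Dp, hDp⟩ := cousin p.1 γ (fun x hx => hγ x (D.subset_of_mem p hp hx))
      exact ⟨Dp, hDp, fun h => absurd h hpS⟩
  choose E hE1 hE2 using hEx
  obtain ⟨D', hmem', hsum'⟩ := combine I D.pieces D.subset_of_mem D.nonoverlap D.cover E
  have hcompat : Compat D' γ := fun q hq => by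
    obtain ⟨p, hp, hq⟩ := hmem' q hq
    exact hE1 p hp q hq
  set h : (Brick ι × (ι → ℝ)) → ℝ := fun p =>
    if hp : p ∈ D.pieces then riemannSum g (E p hp) else 0 with hh
  have hsum : riemannSum g D' = ∑ p ∈ D.pieces, h p :=
    hsum' g h (fun p hp => by rw [hh]; simp only [dif_pos hp])
  have hS' : ∀ p ∈ S, h p = g p.2 * (p.1 : Brick ι).vol := by
    intro p hp
    have hpD := hS hp
    rw [hh]; simp only [dif_pos hpD]
    rw [riemannSum, hE2 p hpD hp, Finset.sum_singleton]
  have hnn : ∀ p ∈ D.pieces, 0 ≤ h p := by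
    intro p hp
    rw [hh]; simp only [dif_pos hp]
    exact Finset.sum_nonneg fun q _ => mul_nonneg (hg _) q.1.vol_nonneg
  have heq : ∑ p ∈ S, g p.2 * (p.1 : Brick ι).vol = ∑ p ∈ S, h p :=
    Finset.sum_congr rfl (fun p hp => (hS' p hp).symm)
  rw [heq]
  have h1 : ∑ p ∈ S, h p ≤ ∑ p ∈ D.pieces, h p :=
    Finset.sum_le_sum_of_subset_of_nonneg hS (fun p hp _ => hnn p hp)
  have h2 := hprop D' hcompat
  rw [abs_lt] at h2
  linarith [hsum]
/-- **Levi's monotone convergence theorem for gauge integrals.** -/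
theorem levi_monotone_convergence (I : Brick ι) (f : (ι → ℝ) → ℝ)
    (fr : ℕ → (ι → ℝ) → ℝ) (Fr : ℕ → ℝ)
    (hint : ∀ r, HasHK I (fr r) (Fr r))
    (hmono : ∀ P, Monotone fun r => fr r P)
    (hlim : ∀ P, Filter.Tendsto (fun r => fr r P) Filter.atTop (nhds (f P)))
    (F : ℝ) (hsup : IsLUB (Set.range Fr) F) :
    HasHK I f F := by
  classical
  intro ε hε
  have hvolI := I.vol_pos
  set c : ℝ := ε / 4 / I.vol with hc
  have hcpos : 0 < c := by positivity
  obtain ⟨N, hN⟩ : ∃ N, F - ε / 4 < Fr N := by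
    by_contra hcon
    push_neg at hcon
    have : F ≤ F - ε / 4 := hsup.2 (by rintro y ⟨r, rfl⟩; exact hcon r)
    linarith
  have hFrF : ∀ r, Fr r ≤ F := fun r => hsup.1 ⟨r, rfl⟩
  obtain ⟨δN, hδN, hδNprop⟩ := hint N (ε / 4) (by linarith)
  have hgint : ∀ s : ℕ, HasHK I (fun x => fr (s + 1) x - fr s x) (Fr (s + 1) - Fr s) :=
    fun s => (hint (s + 1)).sub (hint s)
  choose γ hγ hγprop using fun s : ℕ => hgint s (ε / 8 * (1 / 2) ^ s) (by positivity)
  have hfrle : ∀ (P : ι → ℝ) (r : ℕ), fr r P ≤ f P := fun P r =>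
    (hmono P).ge_of_tendsto (hlim P) r
  have hrex : ∀ P : ι → ℝ, ∃ r : ℕ, N ≤ r ∧ f P - fr r P < c := by
    intro P
    have hev : ∀ᶠ r in Filter.atTop, f P - c < fr r P :=
      (hlim P).eventually (eventually_gt_nhds (by linarith : f P - c < f P))
    obtain ⟨r, hr1, hr2⟩ := (Filter.eventually_ge_atTop N).and hev |>.exists
    exact ⟨r, hr1, by linarith⟩
  choose rP hrPN hrPc using hrex
  set δ : (ι → ℝ) → ℝ := fun P =>
    (Finset.range (rP P + 1)).inf' (by simp) (fun s => min (δN P) (γ s P)) with hδdef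
  refine ⟨δ, ?_, ?_⟩
  · intro x hx
    rw [hδdef]
    rw [Finset.lt_inf'_iff]
    intro s _
    exact lt_min (hδN x hx) (hγ s x hx)
  intro D hD
  have hδle : ∀ P, δ P ≤ δN P := fun P =>
    (Finset.inf'_le _ (by simp : (0:ℕ) ∈ Finset.range (rP P + 1))).trans (min_le_left _ _)
  have hδγ : ∀ (P : ι → ℝ) (s : ℕ), s < rP P → δ P ≤ γ s P := fun P s hs =>
    (Finset.inf'_le _ (Finset.mem_range.2 (by omega) : s ∈ Finset.range (rP P + 1))).trans
      (min_le_right _ _)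
  have hDN : Compat D δN := fun p hp => (hD p hp).trans (Metric.ball_subset_ball (hδle p.2))
  have hSN := hδNprop D hDN
  rw [abs_lt] at hSN
  -- D is nonempty
  have hDne : D.pieces.Nonempty := by
    by_contra h
    rw [Finset.not_nonempty_iff_eq_empty] at h
    have hmem := I.lower_mem_toSet
    rw [D.cover, h] at hmem
    simp at hmem
  set M : ℕ := D.pieces.sup (fun p => rP p.2) with hM
  have hrPM : ∀ p ∈ D.pieces, rP p.2 ≤ M := fun p hp => Finset.le_sup (f := fun p => rP p.2) hp
  have hNM : N ≤ M := by
    obtain ⟨p, hp⟩ := hDne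
    exact (hrPN p.2).trans (hrPM p hp)
  set T : ℝ := ∑ p ∈ D.pieces, fr (rP p.2) p.2 * (p.1 : Brick ι).vol with hT
  have hfT1 : T ≤ riemannSum f D := Finset.sum_le_sum fun p _ =>
    mul_le_mul_of_nonneg_right (hfrle p.2 (rP p.2)) p.1.vol_nonneg
  have hfT2 : riemannSum f D - T ≤ ε / 4 := by
    have heq : riemannSum f D - T
        = ∑ p ∈ D.pieces, (f p.2 - fr (rP p.2) p.2) * (p.1 : Brick ι).vol := by
      rw [riemannSum, hT, ← Finset.sum_sub_distrib]
      exact Finset.sum_congr rfl fun p _ => by ring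
    rw [heq]
    calc ∑ p ∈ D.pieces, (f p.2 - fr (rP p.2) p.2) * (p.1 : Brick ι).vol
        ≤ ∑ p ∈ D.pieces, c * (p.1 : Brick ι).vol :=
          Finset.sum_le_sum fun p _ =>
            mul_le_mul_of_nonneg_right (le_of_lt (hrPc p.2)) p.1.vol_nonneg
      _ = c * ∑ p ∈ D.pieces, (p.1 : Brick ι).vol := by rw [Finset.mul_sum]
      _ ≤ c * I.vol := mul_le_mul_of_nonneg_left D.sum_vol_le hcpos.le
      _ = ε / 4 := by rw [hc]; field_simp
  have hTN : riemannSum (fr N) D ≤ T := Finset.sum_le_sum fun p _ =>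
    mul_le_mul_of_nonneg_right (hmono p.2 (hrPN p.2)) p.1.vol_nonneg
  -- telescoping
  have htel : T - riemannSum (fr N) D =
      ∑ s ∈ Finset.Ico N M, ∑ p ∈ D.pieces.filter (fun p => s < rP p.2),
        (fr (s + 1) p.2 - fr s p.2) * (p.1 : Brick ι).vol := by
    rw [hT, riemannSum, ← Finset.sum_sub_distrib]
    have hper : ∀ p ∈ D.pieces,
        fr (rP p.2) p.2 * (p.1 : Brick ι).vol - fr N p.2 * (p.1 : Brick ι).vol
        = ∑ s ∈ Finset.Ico N M, (if s < rP p.2 then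
            (fr (s + 1) p.2 - fr s p.2) * (p.1 : Brick ι).vol else 0) := by
      intro p hp
      have h1 : ∑ s ∈ Finset.Ico N M, (if s < rP p.2 then
            (fr (s + 1) p.2 - fr s p.2) * (p.1 : Brick ι).vol else 0)
          = ∑ s ∈ Finset.Ico N (rP p.2),
            (fr (s + 1) p.2 - fr s p.2) * (p.1 : Brick ι).vol := by
        rw [← Finset.sum_filter]
        congr 1
        ext s
        simp only [Finset.mem_filter, Finset.mem_Ico]
        have ha := hrPN p.2
        have hb := hrPM p hp
        omega
      rw [h1, ← Finset.sum_mul]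
      have h2 : ∑ s ∈ Finset.Ico N (rP p.2), (fr (s + 1) p.2 - fr s p.2)
          = fr (rP p.2) p.2 - fr N p.2 := by
        rw [Finset.sum_Ico_eq_sub _ (hrPN p.2)]
        rw [Finset.sum_range_sub (fun s => fr s p.2), Finset.sum_range_sub (fun s => fr s p.2)]
        ring
      rw [h2]; ring
    rw [Finset.sum_congr rfl hper, Finset.sum_comm]
    exact Finset.sum_congr rfl fun s _ => (Finset.sum_filter _ _).symm
  have hbound : ∀ s ∈ Finset.Ico N M,
      ∑ p ∈ D.pieces.filter (fun p => s < rP p.2),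
        (fr (s + 1) p.2 - fr s p.2) * (p.1 : Brick ι).vol
      ≤ (Fr (s + 1) - Fr s) + ε / 8 * (1 / 2) ^ s := by
    intro s _
    refine partial_le (fun x => fr (s + 1) x - fr s x)
      (fun x => sub_nonneg.2 (hmono x (Nat.le_succ s))) (γ s) (hγ s) (hγprop s) D _
      (Finset.filter_subset _ _) ?_
    intro p hp
    obtain ⟨hpD, hps⟩ := Finset.mem_filter.1 hp
    exact (hD p hpD).trans (Metric.ball_subset_ball (hδγ p.2 s hps))
  have hsumtel : T - riemannSum (fr N) D ≤ (Fr M - Fr N) + ε / 4 := by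
    rw [htel]
    calc ∑ s ∈ Finset.Ico N M, ∑ p ∈ D.pieces.filter (fun p => s < rP p.2),
          (fr (s + 1) p.2 - fr s p.2) * (p.1 : Brick ι).vol
        ≤ ∑ s ∈ Finset.Ico N M, ((Fr (s + 1) - Fr s) + ε / 8 * (1 / 2) ^ s) :=
          Finset.sum_le_sum hbound
      _ = (Fr M - Fr N) + ∑ s ∈ Finset.Ico N M, ε / 8 * (1 / 2) ^ s := by
          rw [Finset.sum_add_distrib]
          congr 1
          rw [Finset.sum_Ico_eq_sub _ hNM, Finset.sum_range_sub Fr, Finset.sum_range_sub Fr]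
          ring
      _ ≤ (Fr M - Fr N) + ε / 4 := by
          have : ∑ s ∈ Finset.Ico N M, ε / 8 * (1 / 2) ^ s
              ≤ ∑ s ∈ Finset.range M, ε / 8 * (1 / 2) ^ s := by
            apply Finset.sum_le_sum_of_subset_of_nonneg
            · intro s hs
              exact Finset.mem_range.2 (Finset.mem_Ico.1 hs).2
            · intro s _ _; positivity
          have h2 : ∑ s ∈ Finset.range M, ε / 8 * (1 / 2) ^ s
              = ε / 8 * ∑ s ∈ Finset.range M, (1 / 2 : ℝ) ^ s := by rw [Finset.mul_sum]
          have h3 := sum_geometric_two_le M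
          nlinarith
  have hFM : Fr M ≤ F := hFrF M
  have hup : riemannSum f D < F + ε := by
    have : T ≤ riemannSum (fr N) D + (Fr M - Fr N) + ε / 4 := by linarith
    have hTb : T ≤ F + ε / 2 := by linarith [hSN.2]
    linarith
  have hdown : F - ε < riemannSum f D := by
    have : Fr N - ε / 4 < riemannSum (fr N) D := by linarith [hSN.1]
    linarith
  rw [abs_lt]
  constructor <;> linarith
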